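/- Let k ≥ 2 and let A ⊆ ℕ satisfy r_{1,k}(A,n) = r_{1,k}(ℕ∖A, n) for all sufficiently large n. Then liminf_{n→∞} r_{1,k}(A,n)/n > 0, i.e., there exist c > 0 and N such that r_{1,k}(A,n) ≥ c·n for all n ≥ N. -/

import Mathlib

open Finset

noncomputable def weightedRep (A : Set ℕ) (k n : ℕ) : ℕ :=
  {p : ℕ × ℕ | p.1 ∈ A ∧ p.2 ∈ A ∧ n = p.1 + k * p.2}.ncard

namespace StmtAux

open Classical in
/-- number of `t ≤ m` with `χ t` and `¬ χ (m - t)` -/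
noncomputable def fc (χ : ℕ → Prop) (m : ℕ) : ℕ :=
  ((Finset.range (m+1)).filter (fun t => χ t ∧ ¬ χ (m - t))).card

open Classical in
noncomputable def bc (A : Set ℕ) (k n : ℕ) : ℕ :=
  ((Finset.range (n/k+1)).filter (fun b => (n - k*b) ∈ A ∧ b ∈ A)).card

lemma rep_eq_bc (A : Set ℕ) (k n : ℕ) (hk : 1 ≤ k) : weightedRep A k n = bc A k n := by
  classical
  have hinj : Function.Injective (fun b : ℕ => (n - k*b, b)) := by
    intro a b hab
    simpa using congrArg Prod.snd hab
  have hset : {p : ℕ × ℕ | p.1 ∈ A ∧ p.2 ∈ A ∧ n = p.1 + k * p.2} =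
      ↑(((Finset.range (n/k+1)).filter (fun b => (n - k*b) ∈ A ∧ b ∈ A)).image
        (fun b => (n - k*b, b))) := by
    ext ⟨a, b⟩
    simp only [Set.mem_setOf_eq, Finset.coe_image, Set.mem_image, Finset.mem_coe,
      Finset.mem_filter, Finset.mem_range, Prod.mk.injEq]
    constructor
    · rintro ⟨ha, hb, hn⟩
      refine ⟨b, ⟨?_, ?_, hb⟩, ?_, rfl⟩
      · have h1 : k * b ≤ n := by omega
        have h2 := Nat.div_le_div_right (c := k) h1
        rw [Nat.mul_div_cancel_left b (by omega)] at h2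
        omega
      · have he : n - k*b = a := by omega
        rw [he]; exact ha
      · omega
    · rintro ⟨b', ⟨hb1, hb2, hb3⟩, h1, h2⟩
      subst h2
      have hkb : k * b' ≤ n := by
        have hb' : b' ≤ n/k := by omega
        calc k * b' ≤ k * (n/k) := Nat.mul_le_mul_left k hb'
        _ ≤ n := Nat.mul_div_le n k
      subst h1
      exact ⟨hb2, hb3, by omega⟩
  rw [weightedRep, hset, Set.ncard_coe_finset, Finset.card_image_of_injective _ hinj, bc]


open Classical in
lemma fc_swap (χ : ℕ → Prop) (m : ℕ) :
    ((Finset.range (m+1)).filter (fun q => ¬ χ q ∧ χ (m - q))).card = fc χ m := by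
  apply Finset.card_bij (fun q _ => m - q)
  · intro a ha
    simp only [Finset.mem_filter, Finset.mem_range] at ha ⊢
    obtain ⟨h1, h2, h3⟩ := ha
    have he : m - (m - a) = a := by omega
    refine ⟨by omega, h3, by rw [he]; exact h2⟩
  · intro a ha b hb hab
    simp only [Finset.mem_filter, Finset.mem_range] at ha hb
    omega
  · intro b hb
    simp only [Finset.mem_filter, Finset.mem_range] at hb
    refine ⟨m - b, ?_, by omega⟩
    simp only [Finset.mem_filter, Finset.mem_range]
    have he : m - (m - b) = b := by omega
    rw [he]
    exact ⟨by omega, hb.2.2, hb.2.1⟩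


section Abstract
set_option linter.unusedSectionVars false
set_option maxHeartbeats 1000000
variable {k M : ℕ} {χ : ℕ → Prop} (hk : 2 ≤ k) (hM : 1 ≤ M)
  (hkey : ∀ m, M ≤ m → (χ m ↔ ¬ χ (m / k)))

include hk hM hkey in

lemma exists_switch (X : ℕ) (hX : M ≤ X) :
    ∃ x, X ≤ x ∧ x < k * X ∧ ¬ (χ x ↔ χ (x+1)) := by
  by_contra h
  push_neg at h
  have hconst : ∀ j, X + j ≤ k * X → (χ (X + j) ↔ χ X) := by
    intro j
    induction j with
    | zero => intro _; rfl
    | succ j ih =>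
      intro hj
      have h1 := h (X + j) (by omega) (by omega)
      have h2 := ih (by omega)
      rw [show X + (j+1) = (X + j) + 1 by ring] at *
      tauto
  have hXk : X ≤ k * X := Nat.le_mul_of_pos_left X (by omega)
  have h1 : χ (k * X) ↔ χ X := by
    have := hconst (k * X - X) (by omega)
    rwa [show X + (k * X - X) = k * X by omega] at this
  have h2 := hkey (k * X) (le_trans hX hXk)
  rw [Nat.mul_div_cancel_left X (by omega : 0 < k)] at h2
  tauto

include hk hM hkey in
lemma switch_down (x : ℕ) (hx : M ≤ x) (hsw : ¬ (χ x ↔ χ (x+1))) :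
    ∃ q, 1 ≤ q ∧ x + 1 = k * q ∧ ¬ (χ (q-1) ↔ χ q) := by
  have h1 := hkey x hx
  have h2 := hkey (x+1) (by omega)
  have hne : ¬ (χ (x/k) ↔ χ ((x+1)/k)) := by tauto
  have hdvd : k ∣ (x+1) := by
    by_contra hd
    rw [Nat.succ_div, if_neg hd] at hne
    simp at hne
  refine ⟨(x+1)/k, ?_, ?_, ?_⟩
  · exact Nat.div_pos (Nat.le_of_dvd (by omega) hdvd) (by omega)
  · exact (Nat.mul_div_cancel' hdvd).symm
  · have hxdiv : (x+1)/k = x / k + 1 := by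
      rw [Nat.succ_div, if_pos hdvd]
    rw [hxdiv] at hne ⊢
    simpa using hne

include hk hM hkey in
lemma switch_div (i : ℕ) : ∀ x, k^i * (M+1) ≤ x + 1 → ¬ (χ x ↔ χ (x+1)) →
    k^i ∣ (x+1) := by
  induction i with
  | zero => intro x _ _; simpa using one_dvd _
  | succ i ih =>
    intro x hx hsw
    have hki : k ≤ k^(i+1) := Nat.le_self_pow (by omega) k
    have hpow : k^(i+1) = k * k^i := by ring
    have hxM : M ≤ x := by
      have h2 : 2*(M+1) ≤ k^(i+1)*(M+1) := Nat.mul_le_mul_right _ (by omega)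
      omega
    obtain ⟨q, hq1, hq2, hq3⟩ := switch_down hk hM hkey x hxM hsw
    have hq3' : ¬ (χ (q-1) ↔ χ ((q-1)+1)) := by
      rw [show q - 1 + 1 = q by omega]; exact hq3
    have hq : k^i * (M+1) ≤ (q-1) + 1 := by
      rw [show q - 1 + 1 = q by omega]
      have h3 : k * (k^i * (M+1)) ≤ k * q := by
        rw [← mul_assoc, ← hpow, ← hq2]
        exact hx
      exact Nat.le_of_mul_le_mul_left h3 (by omega)
    have hdq := ih (q-1) hq hq3'
    rw [show q - 1 + 1 = q by omega] at hdq
    rw [hq2, hpow]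
    exact mul_dvd_mul_left k hdq


include hk hM hkey in

lemma fc_large (J m : ℕ) (hm : 4 * (M+2) * k^(2*J+2*M) ≤ m) : J ≤ fc χ m + 1 := by
  classical
  set Kp := k^(2*J+2*M) with hKp
  have hk1 : 1 < k := hk
  have hKp1 : 0 < Kp := pow_pos (by omega) _
  have hMK : M < k^(2*M+1) := by
    calc M < 2^(2*M+1) := by
          have h1 : M < 2^M := Nat.lt_two_pow_self (n := M)
          have h2 : (2:ℕ)^M ≤ 2^(2*M+1) := Nat.pow_le_pow_right (by omega) (by omega)
          omega
    _ ≤ k^(2*M+1) := Nat.pow_le_pow_left hk _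
  have hA1 : Kp * (M+1) + Kp ≤ m := by nlinarith
  have hA2 : 4 * Kp ≤ m := by nlinarith
  -- switches at each scale
  have hswx : ∀ j, ∃ x, M * k^(2*j) ≤ x ∧ x < k * (M * k^(2*j)) ∧ ¬(χ x ↔ χ (x+1)) := by
    intro j
    exact exists_switch hk hM hkey _ (Nat.le_mul_of_pos_right M (pow_pos (by omega) _))
  choose x hx1 hx2 hx3 using hswx
  have hxub : ∀ j, j < J → k * (M * k^(2*j)) ≤ Kp := by
    intro j hj
    calc k * (M * k^(2*j)) = M * k^(2*j+1) := by ring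
    _ ≤ k^(2*M+1) * k^(2*j+1) := Nat.mul_le_mul_right _ (le_of_lt hMK)
    _ = k^(2*M+2*j+2) := by rw [← pow_add]; ring_nf
    _ ≤ Kp := Nat.pow_le_pow_right (by omega) (by omega)
  have hxKp : ∀ j, j < J → x j < Kp := fun j hj => lt_of_lt_of_le (hx2 j) (hxub j hj)
  set G := (Finset.range (m+1)).filter (fun z => χ z ∧ ¬ χ (m - z)) with hGdef
  have hfc : G.card = fc χ m := rfl
  set P : ℕ → Prop := fun j =>
    ∃ z ∈ G, (z = x j ∨ z = x j + 1 ∨ z = m - x j - 1 ∨ z = m - x j) with hPdef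
  -- dichotomy
  have hdich : ∀ j, j < J → P j ∨ Kp ∣ (m - x j) := by
    intro j hj
    by_cases hc : P j
    · exact Or.inl hc
    right
    have hcc : ∀ z ∈ G, ¬(z = x j ∨ z = x j + 1 ∨ z = m - x j - 1 ∨ z = m - x j) := by
      intro z hz hdisj
      exact hc ⟨z, hz, hdisj⟩
    have hxm : x j + 1 < m := by have := hxKp j hj; omega
    have h4 : ∀ z, (z = x j ∨ z = x j + 1 ∨ z = m - x j - 1 ∨ z = m - x j) → z ≤ m →
        ¬(χ z ∧ ¬ χ (m - z)) := by
      intro z hz hzm hpred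
      exact hcc z (Finset.mem_filter.mpr ⟨Finset.mem_range.mpr (by omega), hpred⟩) hz
    have e1 : ¬(χ (x j) ∧ ¬ χ (m - x j)) := h4 _ (Or.inl rfl) (by omega)
    have e2 : ¬(χ (x j + 1) ∧ ¬ χ (m - (x j + 1))) :=
      h4 _ (Or.inr (Or.inl rfl)) (by omega)
    have e3 : ¬(χ (m - x j - 1) ∧ ¬ χ (m - (m - x j - 1))) :=
      h4 _ (Or.inr (Or.inr (Or.inl rfl))) (by omega)
    have e4 : ¬(χ (m - x j) ∧ ¬ χ (m - (m - x j))) :=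
      h4 _ (Or.inr (Or.inr (Or.inr rfl))) (by omega)
    rw [show m - (m - x j) = x j from by omega] at e4
    rw [show m - (m - x j - 1) = x j + 1 from by omega] at e3
    rw [show m - (x j + 1) = m - x j - 1 from by omega] at e2
    have heq1 : χ (x j) ↔ χ (m - x j) := by tauto
    have heq2 : χ (x j + 1) ↔ χ (m - x j - 1) := by tauto
    have hswy : ¬(χ (m - x j - 1) ↔ χ ((m - x j - 1) + 1)) := by
      rw [show m - x j - 1 + 1 = m - x j from by omega]
      have := hx3 j
      tauto
    have hbound : k^(2*J+2*M) * (M+1) ≤ (m - x j - 1) + 1 := by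
      rw [show m - x j - 1 + 1 = m - x j from by omega, ← hKp]
      have := hxKp j hj
      omega
    have hdvd := switch_div hk hM hkey (2*J+2*M) (m - x j - 1) hbound hswy
    rwa [show m - x j - 1 + 1 = m - x j from by omega, ← hKp] at hdvd
  -- x's are increasing
  have horder : ∀ a b, a < b → x a < x b := by
    intro a b hab
    calc x a < k * (M * k^(2*a)) := hx2 a
    _ = M * k^(2*a+1) := by ring
    _ ≤ M * k^(2*b) := Nat.mul_le_mul_left M (Nat.pow_le_pow_right (by omega) (by omega))
    _ ≤ x b := hx1 b
  -- at most one bad j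
  have hbad : ((Finset.range J).filter (fun j => ¬ P j)).card ≤ 1 := by
    rw [Finset.card_le_one]
    intro j hj j' hj'
    simp only [Finset.mem_filter, Finset.mem_range] at hj hj'
    have d1 : Kp ∣ (m - x j) := (hdich j hj.1).resolve_left hj.2
    have d2 : Kp ∣ (m - x j') := (hdich j' hj'.1).resolve_left hj'.2
    have hxj := hxKp j hj.1
    have hxj' := hxKp j' hj'.1
    have hxm : x j ≤ m := by omega
    have hxm' : x j' ≤ m := by omega
    have hxeq : x j = x j' := by
      have hd3 : Kp ∣ (m - x j) - (m - x j') := Nat.dvd_sub d1 d2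
      have hd4 : Kp ∣ (m - x j') - (m - x j) := Nat.dvd_sub d2 d1
      rw [show (m - x j) - (m - x j') = x j' - x j from by omega] at hd3
      rw [show (m - x j') - (m - x j) = x j - x j' from by omega] at hd4
      rcases Nat.le_total (x j) (x j') with h | h
      · rcases Nat.eq_or_lt_of_le h with h' | h'
        · exact h'
        · have := Nat.le_of_dvd (by omega) hd3; omega
      · rcases Nat.eq_or_lt_of_le h with h' | h'
        · exact h'.symm
        · have := Nat.le_of_dvd (by omega) hd4; omega
    by_contra hne
    rcases Nat.lt_or_ge j j' with h | h
    · have := horder j j' h; omega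
    · have hlt : j' < j := by omega
      have := horder j' j hlt; omega
  have hsplit := Finset.card_filter_add_card_filter_not (s := Finset.range J)
    (p := P)
  rw [Finset.card_range] at hsplit
  have hgood : J ≤ ((Finset.range J).filter P).card + 1 := by omega
  -- witness function
  set zf : ℕ → ℕ := fun j => if h : P j then h.choose else 0 with hzfdef
  have hzspec : ∀ j, P j → zf j ∈ G ∧
      (zf j = x j ∨ zf j = x j + 1 ∨ zf j = m - x j - 1 ∨ zf j = m - x j) := by
    intro j h
    rw [hzfdef]
    simp only [dif_pos h]
    exact h.choose_spec
  -- regions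
  have hreg : ∀ j, j < J → ∀ z, (z = x j ∨ z = x j + 1 ∨ z = m - x j - 1 ∨ z = m - x j) →
      (M * k^(2*j) ≤ z ∧ z ≤ k * (M * k^(2*j))) ∨
      (m - k*(M*k^(2*j)) ≤ z ∧ z ≤ m - M * k^(2*j)) := by
    intro j hj z hz
    have h1 := hx1 j
    have h2 := hx2 j
    have h3 := hxub j hj
    have hxm : x j ≤ m := by have := hxKp j hj; omega
    have hkxm : k * (M * k^(2*j)) ≤ m := by omega
    rcases hz with rfl | rfl | rfl | rfl
    · left; omega
    · left; omega
    · right; omega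
    · right; omega
  have hdisj : ∀ a b, a < b → b < J → ∀ z,
      ((M * k^(2*a) ≤ z ∧ z ≤ k * (M * k^(2*a))) ∨
        (m - k*(M*k^(2*a)) ≤ z ∧ z ≤ m - M * k^(2*a))) →
      ((M * k^(2*b) ≤ z ∧ z ≤ k * (M * k^(2*b))) ∨
        (m - k*(M*k^(2*b)) ≤ z ∧ z ≤ m - M * k^(2*b))) → False := by
    intro a b hab hbJ z hza hzb
    have hUa : k * (M * k^(2*a)) < M * k^(2*b) := by
      calc k * (M * k^(2*a)) = M * k^(2*a+1) := by ring
      _ < M * k^(2*b) := by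
          exact mul_lt_mul_of_pos_left (Nat.pow_lt_pow_right hk1 (by omega)) (by omega : 0 < M)
    have hUb := hxub b hbJ
    have hUa' := hxub a (by omega)
    have hLa : 1 ≤ M * k^(2*a) := Nat.one_le_iff_ne_zero.mpr (by positivity)
    have hLb : 1 ≤ M * k^(2*b) := Nat.one_le_iff_ne_zero.mpr (by positivity)
    have hLUa : M * k^(2*a) ≤ k * (M * k^(2*a)) := Nat.le_mul_of_pos_left _ (by omega)
    have hLUb : M * k^(2*b) ≤ k * (M * k^(2*b)) := Nat.le_mul_of_pos_left _ (by omega)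
    omega
  have hinj : ((Finset.range J).filter P).card ≤ G.card := by
    apply Finset.card_le_card_of_injOn zf
    · intro j hj
      simp only [Finset.mem_coe, Finset.mem_filter] at hj
      exact (hzspec j hj.2).1
    · intro j hj j' hj' heq
      simp only [Finset.coe_filter, Set.mem_setOf_eq, Finset.mem_range] at hj hj'
      by_contra hne
      have r1 := hreg j hj.1 (zf j) (hzspec j hj.2).2
      have r2 := hreg j' hj'.1 (zf j') (hzspec j' hj'.2).2
      rw [heq] at r1
      rcases Nat.lt_or_ge j j' with h | h
      · exact hdisj j j' h hj'.1 (zf j') r1 r2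
      · have hlt : j' < j := by omega
        exact hdisj j' j hlt hj.1 (zf j') r2 (heq ▸ r1)
  omega


include hk hM hkey in
lemma rec_lower (m : ℕ) (hm : k*(2*M+8) ≤ m) :
    (m % k + 1) * fc χ (m/k) + (k - 1 - m % k) * fc χ (m/k - 1)
      ≤ fc χ m + k * (2*M+3) := by
  classical
  have hk0 : 0 < k := by omega
  obtain ⟨m₁, hm₁⟩ : ∃ t, t = m / k := ⟨_, rfl⟩
  obtain ⟨ρ, hρ⟩ : ∃ t, t = m % k := ⟨_, rfl⟩
  rw [← hm₁, ← hρ]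
  have hmod : k * m₁ + ρ = m := by rw [hm₁, hρ]; exact Nat.div_add_mod m k
  have hρk : ρ < k := by rw [hρ]; exact Nat.mod_lt _ hk0
  have hm₁big : 2*M+8 ≤ m₁ := by
    have h := Nat.div_le_div_right (c := k) hm
    rw [Nat.mul_div_cancel_left _ hk0] at h
    rw [hm₁]
    exact h
  set Q := Finset.Icc M (m₁ - M - 3) with hQ
  set C₁ := Q.filter (fun q => ¬ χ q ∧ χ (m₁ - q)) with hC₁
  set C₂ := Q.filter (fun q => ¬ χ q ∧ χ (m₁ - 1 - q)) with hC₂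
  have hcover : ∀ (p : ℕ → Prop) (inst : DecidablePred p) (n : ℕ), n ≤ m₁ →
      (@Finset.filter _ p inst (range (n+1))).card ≤ (@Finset.filter _ p inst Q).card + (2*M+3) := by
    intro p inst n hn
    letI := inst
    have hsub : (range (n+1)).filter p ⊆
        (Q.filter p) ∪ (range M ∪ Finset.Icc (m₁ - M - 2) m₁) := by
      intro t ht
      simp only [Finset.mem_filter, Finset.mem_range] at ht
      by_cases h1 : t < M
      · exact Finset.mem_union_right _ (Finset.mem_union_left _ (Finset.mem_range.mpr h1))
      by_cases h2 : t ≤ m₁ - M - 3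
      · exact Finset.mem_union_left _
          (Finset.mem_filter.mpr ⟨Finset.mem_Icc.mpr ⟨by omega, h2⟩, ht.2⟩)
      · exact Finset.mem_union_right _
          (Finset.mem_union_right _ (Finset.mem_Icc.mpr ⟨by omega, by omega⟩))
    calc ((range (n+1)).filter p).card
        ≤ ((Q.filter p) ∪ (range M ∪ Finset.Icc (m₁ - M - 2) m₁)).card :=
          Finset.card_le_card hsub
    _ ≤ (Q.filter p).card + (range M ∪ Finset.Icc (m₁ - M - 2) m₁).card :=
          Finset.card_union_le _ _
    _ ≤ (Q.filter p).card + (2*M+3) := by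
        have h3 := Finset.card_union_le (range M) (Finset.Icc (m₁ - M - 2) m₁)
        have h2 : (Finset.Icc (m₁ - M - 2) m₁).card = M + 3 := by
          rw [Nat.card_Icc]; omega
        rw [Finset.card_range, h2] at h3
        omega
  have b1 : fc χ m₁ ≤ C₁.card + (2*M+3) := by
    rw [← fc_swap χ m₁]
    exact hcover _ _ m₁ le_rfl
  have b2 : fc χ (m₁ - 1) ≤ C₂.card + (2*M+3) := by
    rw [← fc_swap χ (m₁ - 1)]
    exact hcover _ _ (m₁ - 1) (by omega)
  set U := (C₁ ×ˢ range (ρ+1)) ∪ (C₂ ×ˢ Finset.Ico (ρ+1) k) with hU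
  have hUcard : U.card = (ρ+1) * C₁.card + (k - 1 - ρ) * C₂.card := by
    rw [hU, Finset.card_union_of_disjoint]
    · rw [Finset.card_product, Finset.card_product, Finset.card_range, Nat.card_Ico]
      have he : k - (ρ+1) = k - 1 - ρ := by omega
      rw [he]; ring
    · rw [Finset.disjoint_left]
      rintro ⟨q, s⟩ h1 h2
      simp only [Finset.mem_product, Finset.mem_range, Finset.mem_Ico] at h1 h2
      omega
  have hfcU : U.card ≤ fc χ m := by
    rw [fc]
    apply Finset.card_le_card_of_injOn (fun p => k * p.1 + p.2)
    · rintro ⟨q, s⟩ hqs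
      dsimp only
      have hmem : (M ≤ q ∧ q ≤ m₁ - M - 3) ∧ s < k ∧
          ((s ≤ ρ ∧ ¬χ q ∧ χ (m₁ - q)) ∨ (ρ < s ∧ ¬χ q ∧ χ (m₁ - 1 - q))) := by
        rw [hU] at hqs
        rcases Finset.mem_union.mp hqs with h | h
        · have h' := Finset.mem_product.mp h
          rw [hC₁] at h'
          obtain ⟨hq, hs⟩ := h'
          rw [Finset.mem_filter, Finset.mem_Icc] at hq
          rw [Finset.mem_range] at hs
          exact ⟨hq.1, by omega, Or.inl ⟨by omega, hq.2⟩⟩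
        · have h' := Finset.mem_product.mp h
          rw [hC₂] at h'
          obtain ⟨hq, hs⟩ := h'
          rw [Finset.mem_filter, Finset.mem_Icc] at hq
          rw [Finset.mem_Ico] at hs
          exact ⟨hq.1, by omega, Or.inr ⟨by omega, hq.2⟩⟩
      obtain ⟨⟨hq1, hq2⟩, hsk, hcase⟩ := hmem
      have hq3 : q + (M + 3) ≤ m₁ := by omega
      have hkm₁ : k * m₁ ≤ m := by omega
      have hρm : ρ ≤ m := by omega
      have hmul : k * (q + (M+3)) ≤ k * m₁ := Nat.mul_le_mul_left k hq3
      have hexp : k * (q + (M+3)) = k*q + (k*M + 3*k) := by ring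
      have hkM : M ≤ k * M := Nat.le_mul_of_pos_left M hk0
      have hqm : q ≤ m₁ := by omega
      have hmulq : k * q ≤ k * m₁ := Nat.mul_le_mul_left k hqm
      have htm : k*q + s + (k*M + 2*k + 1) ≤ m := by omega
      have hkq : k * M ≤ k * q := Nat.mul_le_mul_left k hq1
      have htM : M ≤ k * q + s := by omega
      have hdivt : (k * q + s) / k = q := by
        rw [Nat.mul_add_div hk0, Nat.div_eq_of_lt hsk, add_zero]
      have hmt : M ≤ m - (k*q + s) := by omega
      have hχmt := hkey (m - (k*q+s)) hmt
      have hχt : χ (k*q + s) := by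
        have h := hkey (k*q+s) htM
        rw [hdivt] at h
        rcases hcase with ⟨_, hχq, _⟩ | ⟨_, hχq, _⟩ <;> tauto
      refine Finset.mem_filter.mpr ⟨Finset.mem_range.mpr (by omega), hχt, ?_⟩
      rcases hcase with ⟨hsρ, hχq, hχ₁⟩ | ⟨hρs, hχq, hχ₁⟩
      · have ha : k*(m₁ - q) + k*q = k*m₁ := by
          rw [← Nat.mul_add, Nat.sub_add_cancel hqm]
        have heq : m - (k*q + s) = k * (m₁ - q) + (ρ - s) := by omega
        have hdiv : (m - (k*q+s))/k = m₁ - q := by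
          rw [heq, Nat.mul_add_div hk0, Nat.div_eq_of_lt (by omega), add_zero]
        rw [hdiv] at hχmt
        tauto
      · have hq1m : q + 1 ≤ m₁ := by omega
        have ha : k*(m₁ - 1 - q) + k*(q+1) = k*m₁ := by
          rw [← Nat.mul_add]
          congr 1
          omega
        have heq : m - (k*q + s) = k * (m₁ - 1 - q) + (k + ρ - s) := by
          have hx : k*(q+1) = k*q + k := by ring
          omega
        have hdiv : (m - (k*q+s))/k = m₁ - 1 - q := by
          rw [heq, Nat.mul_add_div hk0, Nat.div_eq_of_lt (by omega), add_zero]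
        rw [hdiv] at hχmt
        tauto
    · rintro ⟨q, s⟩ hqs ⟨q', s'⟩ hqs' heq
      simp only [Finset.mem_coe] at hqs hqs'
      have heq' : k * q + s = k * q' + s' := heq
      clear heq
      have hsk : ∀ p : ℕ × ℕ, p ∈ U → p.2 < k := by
        rintro ⟨a, b⟩ h
        rw [hU] at h
        rcases Finset.mem_union.mp h with h | h <;>
          · have h' := Finset.mem_product.mp h
            first
            | (have := Finset.mem_range.mp h'.2; omega)
            | (have := Finset.mem_Ico.mp h'.2; omega)
      have hs1 : s < k := hsk _ hqs
      have hs2 : s' < k := hsk _ hqs'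
      have e1 : (k*q + s) / k = q := by
        rw [Nat.mul_add_div hk0, Nat.div_eq_of_lt hs1, add_zero]
      have e2 : (k*q' + s') / k = q' := by
        rw [Nat.mul_add_div hk0, Nat.div_eq_of_lt hs2, add_zero]
      have hqq : q = q' := by rw [← e1, ← e2, heq']
      have hss : s = s' := by
        subst hqq
        omega
      exact Prod.ext hqq hss
  calc (ρ+1) * fc χ m₁ + (k - 1 - ρ) * fc χ (m₁ - 1)
      ≤ (ρ+1) * (C₁.card + (2*M+3)) + (k - 1 - ρ) * (C₂.card + (2*M+3)) := by
        exact Nat.add_le_add (Nat.mul_le_mul_left _ b1) (Nat.mul_le_mul_left _ b2)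
  _ = ((ρ+1) * C₁.card + (k - 1 - ρ) * C₂.card) + ((ρ+1) + (k - 1 - ρ))*(2*M+3) := by
        ring
  _ = U.card + k*(2*M+3) := by
        rw [hUcard]
        have he : (ρ+1) + (k - 1 - ρ) = k := by omega
        rw [he]
  _ ≤ fc χ m + k*(2*M+3) := Nat.add_le_add_right hfcU _


include hk hM hkey in
lemma linear_lower :
    ∃ ε : ℝ, 0 < ε ∧ ∃ P : ℕ, k*(2*M+8) ≤ P ∧ ∀ m, P ≤ m →
      (2*k*(2*M+3) : ℝ) + ε * (m+1) ≤ (fc χ m : ℝ) := by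
  classical
  obtain ⟨B, hB⟩ : ∃ t, t = 2*k*(2*M+3) := ⟨_, rfl⟩
  obtain ⟨J, hJ⟩ : ∃ t, t = B + 2 := ⟨_, rfl⟩
  obtain ⟨P, hP⟩ : ∃ t, t = 4 * (M+2) * k^(2*J+2*M) + k*(2*M+8) := ⟨_, rfl⟩
  have hkP0 : (0:ℝ) < (k:ℝ)*((P:ℝ)+1) := by positivity
  refine ⟨1/((k:ℝ)*((P:ℝ)+1)), by positivity, P, by omega, ?_⟩
  intro m
  induction m using Nat.strong_induction_on with
  | _ m ih =>
    intro hm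
    set ε := 1/((k:ℝ)*((P:ℝ)+1)) with hε
    have hε0 : 0 < ε := by positivity
    have hEc : (0:ℝ) ≤ (2*M+3 : ℝ) := by positivity
    have hkR : (2:ℝ) ≤ (k:ℝ) := by exact_mod_cast hk
    by_cases hcase : m < k*(P+1)
    · -- base case
      have hf : J ≤ fc χ m + 1 := fc_large hk hM hkey J m (by omega)
      have hfB : (B:ℝ) + 1 ≤ (fc χ m : ℝ) := by
        have hn : B + 1 ≤ fc χ m := by omega
        exact_mod_cast hn
      have hεm : ε * ((m:ℝ)+1) ≤ 1 := by
        rw [hε, div_mul_eq_mul_div, one_mul, div_le_one hkP0]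
        have hc0 : (m+1 : ℕ) ≤ k*(P+1) := by omega
        have hc : (m:ℝ) + 1 ≤ (k:ℝ)*((P:ℝ)+1) := by exact_mod_cast hc0
        linarith
      have hBcast : (B:ℝ) = 2*(k:ℝ)*(2*(M:ℝ)+3) := by rw [hB]; push_cast; ring
      rw [← hBcast]
      linarith
    · -- inductive step
      push_neg at hcase
      have hk0 : 0 < k := by omega
      have hm₁P : P + 1 ≤ m / k := by
        rw [Nat.le_div_iff_mul_le hk0]
        calc (P+1)*k = k*(P+1) := by ring
        _ ≤ m := hcase
      have hmz : 0 < m := lt_of_lt_of_le (by positivity) hcase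
      have hm₁lt : m / k < m := Nat.div_lt_self hmz (by omega)
      have ih1 := ih (m/k) hm₁lt (by omega)
      have ih2 := ih (m/k - 1) (by omega) (by omega)
      have hrec := rec_lower hk hM hkey m (by omega)
      obtain ⟨r, hr⟩ : ∃ t, t = m % k := ⟨_, rfl⟩
      have hmod : k * (m/k) + r = m := by rw [hr]; exact Nat.div_add_mod m k
      have hρk : r < k := by rw [hr]; exact Nat.mod_lt _ hk0
      have h9 : (k - 1 - m % k : ℕ) = k - (r + 1) := by omega
      rw [h9, ← hr] at hrec
      have hcast : ((k - (r + 1) : ℕ) : ℝ) = (k:ℝ) - ((r:ℝ)+1) := by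
        rw [Nat.cast_sub (by omega)]; push_cast; ring
      have hrecR : ((r:ℝ)+1) * (fc χ (m/k) : ℝ)
          + ((k:ℝ) - ((r:ℝ)+1)) * (fc χ (m/k - 1) : ℝ)
          ≤ (fc χ m : ℝ) + (k:ℝ)*(2*(M:ℝ)+3) := by
        calc ((r:ℝ)+1) * (fc χ (m/k) : ℝ) + ((k:ℝ) - ((r:ℝ)+1)) * (fc χ (m/k - 1) : ℝ)
            = (((r + 1) * fc χ (m/k) + (k - (r + 1)) * fc χ (m/k - 1) : ℕ) : ℝ) := by
              push_cast [hcast]; ring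
        _ ≤ ((fc χ m + k * (2*M+3) : ℕ) : ℝ) := by exact_mod_cast hrec
        _ = (fc χ m : ℝ) + (k:ℝ)*(2*(M:ℝ)+3) := by push_cast; ring
      have hBcast : (B:ℝ) = 2*(k:ℝ)*(2*(M:ℝ)+3) := by rw [hB]; push_cast; ring
      -- cast of m/k - 1
      have h1m : 1 ≤ m / k := by omega
      have hsub : ((m/k - 1 : ℕ) : ℝ) = ((m/k : ℕ) : ℝ) - 1 := by
        rw [Nat.cast_sub h1m]; simp
      rw [hsub] at ih2
      -- multiply ih's by nonnegative coefficients
      have hc1 : (0:ℝ) ≤ (r : ℝ) + 1 := by positivity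
      have hc2 : (0:ℝ) ≤ (k:ℝ) - ((r : ℝ)+1) := by
        have hrk : (r:ℝ) + 1 ≤ (k:ℝ) := by exact_mod_cast hρk
        linarith
      have h1 := mul_le_mul_of_nonneg_left ih1 hc1
      have h2 := mul_le_mul_of_nonneg_left ih2 hc2
      have hmodR : (k:ℝ) * ((m/k : ℕ) : ℝ) + (r : ℝ) = (m : ℝ) := by
        exact_mod_cast hmod
      have hε2 : ε * ((k:ℝ) * ((m/k : ℕ) : ℝ) + (r : ℝ) + 1) = ε * ((m:ℝ)+1) := by
        rw [← hmodR]
      have hfin : (0:ℝ) ≤ ((k:ℝ)*(2*(M:ℝ)+3)) * (2*(k:ℝ) - 3) := by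
        apply mul_nonneg
        · positivity
        · linarith
      nlinarith [h1, h2, hrecR, hε2, hfin]


end Abstract


open Classical in
lemma key_of_hyp (k : ℕ) (hk : 2 ≤ k) (A : Set ℕ) (N : ℕ)
    (h : ∀ n, N ≤ n → bc A k n = bc Aᶜ k n) :
    ∀ m, N + 2*k + 2 ≤ m → ((m ∈ A) ↔ ¬ (m / k ∈ A)) := by
  classical
  set ι : ℕ → ℤ := fun x => if x ∈ A then 1 else 0 with hι
  have hbcA : ∀ n, (bc A k n : ℤ) = ∑ b ∈ range (n/k+1), ι (n - k*b) * ι b := by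
    intro n
    rw [bc, Finset.card_filter]
    push_cast
    apply Finset.sum_congr rfl
    intro b _
    by_cases h1 : (n - k*b) ∈ A <;> by_cases h2 : b ∈ A <;> simp [hι, h1, h2]
  have hbcAc : ∀ n, (bc Aᶜ k n : ℤ)
      = ∑ b ∈ range (n/k+1), (1 - ι (n - k*b)) * (1 - ι b) := by
    intro n
    rw [bc, Finset.card_filter]
    push_cast
    apply Finset.sum_congr rfl
    intro b _
    by_cases h1 : (n - k*b) ∈ A <;> by_cases h2 : b ∈ A <;>
      simp [hι, h1, h2, Set.mem_compl_iff]
  have hsum : ∀ n, N ≤ n →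
      ∑ b ∈ range (n/k+1), (ι (n - k*b) + ι b) = ((n/k : ℕ) + 1 : ℤ) := by
    intro n hn
    have he := congrArg (Nat.cast : ℕ → ℤ) (h n hn)
    rw [hbcA, hbcAc] at he
    have hz : ∑ b ∈ range (n/k+1),
        (ι (n-k*b) * ι b - (1 - ι (n-k*b))*(1 - ι b)) = 0 := by
      rw [Finset.sum_sub_distrib, he, sub_self]
    calc ∑ b ∈ range (n/k+1), (ι (n - k*b) + ι b)
        = ∑ b ∈ range (n/k+1),
            ((ι (n-k*b) * ι b - (1 - ι (n-k*b))*(1-ι b)) + 1) := by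
          apply Finset.sum_congr rfl; intros; ring
    _ = 0 + ((n/k : ℕ)+1 : ℤ) := by
          rw [Finset.sum_add_distrib, hz, Finset.sum_const, Finset.card_range]
          simp
    _ = _ := by ring
  have hstep : ∀ n, N ≤ n → ι (n + k) + ι (n/k + 1) = 1 := by
    intro n hn
    have h1 := hsum n hn
    have h2 := hsum (n+k) (by omega)
    have hdiv : (n+k)/k = n/k + 1 := Nat.add_div_right _ (by omega)
    rw [hdiv] at h2
    rw [Finset.sum_add_distrib] at h1 h2
    rw [show n/k + 1 + 1 = (n/k+1) + 1 from rfl] at h2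
    rw [Finset.sum_range_succ (fun b => ι b) (n/k+1)] at h2
    have hre : ∑ b ∈ range (n/k+1+1), ι (n+k - k*b)
        = (∑ b ∈ range (n/k+1), ι (n - k*b)) + ι (n+k) := by
      rw [Finset.sum_range_succ']
      congr 1
      · apply Finset.sum_congr rfl
        intro b _
        congr 1
        rw [mul_add, mul_one]
        omega
    rw [hre] at h2
    push_cast at h1 h2
    linarith
  intro m hm
  have hs := hstep (m - k) (by omega)
  rw [show m - k + k = m from by omega] at hs
  have hdiv : (m-k)/k + 1 = m/k := by
    have hd := Nat.add_div_right (m - k) (show 0 < k by omega)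
    rw [show m - k + k = m from by omega] at hd
    omega
  rw [hdiv] at hs
  by_cases hA1 : m ∈ A <;> by_cases hA2 : m/k ∈ A <;>
    simp [hι, hA1, hA2] at hs ⊢ <;> tauto


end StmtAux


open StmtAux

theorem stmt_1 (k : ℕ) (hk : 2 ≤ k) (A : Set ℕ)
    (hA : ∀ᶠ n in Filter.atTop, weightedRep A k n = weightedRep Aᶜ k n) :
    ∃ c : ℝ, 0 < c ∧ ∃ N : ℕ, ∀ n ≥ N, c * n ≤ (weightedRep A k n : ℝ) := by
  classical
  rw [Filter.eventually_atTop] at hA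
  obtain ⟨N, hN⟩ := hA
  have hbc : ∀ n, N ≤ n → bc A k n = bc Aᶜ k n := by
    intro n hn
    have h := hN n hn
    rwa [rep_eq_bc A k n (by omega), rep_eq_bc Aᶜ k n (by omega)] at h
  have hk0 : 0 < k := by omega
  set M := N + 2*k + 2 with hMdef
  have hM1 : 1 ≤ M := by omega
  have hkey : ∀ m, M ≤ m → ((fun x => x ∈ A) m ↔ ¬ (fun x => x ∈ A) (m / k)) := by
    intro m hm
    exact key_of_hyp k hk A N hbc m hm
  obtain ⟨ε, hε, P, hPbig, hlin⟩ := linear_lower hk hM1 hkey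
  refine ⟨ε / k, by positivity, k*(P+1), ?_⟩
  intro n hn
  set m₁ := n / k with hm₁def
  have hn₁ : P + 1 ≤ m₁ := by
    rw [hm₁def, Nat.le_div_iff_mul_le hk0]
    calc (P+1)*k = k*(P+1) := by ring
    _ ≤ n := hn
  have hmod : k * m₁ + n % k = n := Nat.div_add_mod n k
  have hρk : n % k < k := Nat.mod_lt _ hk0
  -- counting: fc (· ∈ A) m₁ ≤ bc A k n + (M+1)
  have hcount : fc (fun x => x ∈ A) m₁ ≤ bc A k n + (M+1) := by
    set V := (range (m₁+1)).filter
      (fun b => ((fun x => x ∈ A) b ∧ ¬ (fun x => x ∈ A) (m₁ - b)) ∧ b + M ≤ m₁) with hV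
    have hsub : (range (m₁+1)).filter
        (fun t => (fun x => x ∈ A) t ∧ ¬ (fun x => x ∈ A) (m₁ - t))
        ⊆ V ∪ Finset.Icc (m₁ - M) m₁ := by
      intro t ht
      rw [Finset.mem_filter, Finset.mem_range] at ht
      by_cases hc : t + M ≤ m₁
      · exact Finset.mem_union_left _
          (Finset.mem_filter.mpr ⟨Finset.mem_range.mpr ht.1, ht.2, hc⟩)
      · exact Finset.mem_union_right _ (Finset.mem_Icc.mpr ⟨by omega, by omega⟩)
    have h1 : fc (fun x => x ∈ A) m₁ ≤ V.card + (M+1) := by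
      rw [fc]
      calc _ ≤ (V ∪ Finset.Icc (m₁ - M) m₁).card := Finset.card_le_card hsub
      _ ≤ V.card + (Finset.Icc (m₁ - M) m₁).card := Finset.card_union_le _ _
      _ ≤ V.card + (M+1) := by
          have hc : (Finset.Icc (m₁ - M) m₁).card ≤ M + 1 := by
            rw [Nat.card_Icc]; omega
          omega
    have h2 : V.card ≤ bc A k n := by
      rw [bc]
      apply Finset.card_le_card_of_injOn id
      · intro b hb
        rw [hV, Finset.mem_coe, Finset.mem_filter, Finset.mem_range] at hb
        obtain ⟨hbm, ⟨hbA, hbnA⟩, hbM⟩ := hb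
        simp only at hbA hbnA
        have hbm₁ : b ≤ m₁ := by omega
        have hmul : k * b ≤ k * m₁ := Nat.mul_le_mul_left k hbm₁
        have hmulM : k * M ≤ k * (m₁ - b) := Nat.mul_le_mul_left k (by omega)
        have hkM : M ≤ k * M := Nat.le_mul_of_pos_left M hk0
        have ha : k*(m₁ - b) + k*b = k*m₁ := by
          rw [← Nat.mul_add, Nat.sub_add_cancel hbm₁]
        have heq : n - k*b = k * (m₁ - b) + n % k := by omega
        have hMle : M ≤ n - k*b := by omega
        have hdiv : (n - k*b)/k = m₁ - b := by
          rw [heq, Nat.mul_add_div hk0, Nat.div_eq_of_lt hρk, add_zero]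
        have hkA := hkey (n - k*b) hMle
        rw [hdiv] at hkA
        simp only at hkA
        rw [id, Finset.mem_coe, Finset.mem_filter, Finset.mem_range]
        exact ⟨by omega, hkA.mpr hbnA, hbA⟩
      · intro a _ b _ hab
        exact hab
    omega
  -- real arithmetic
  have hlin₁ := hlin m₁ (by omega)
  have hBM : (M + 1 : ℕ) ≤ 2*k*(2*M+3) := by nlinarith
  have hBMR : ((M:ℝ) + 1) ≤ 2*(k:ℝ)*(2*(M:ℝ)+3) := by exact_mod_cast hBM
  have hcountR : (fc (fun x => x ∈ A) m₁ : ℝ) ≤ (bc A k n : ℝ) + ((M:ℝ)+1) := by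
    exact_mod_cast hcount
  have hε1 : ε * ((m₁:ℝ)+1) ≤ (bc A k n : ℝ) := by
    have hBc : (2*k*(2*M+3) : ℝ) = 2*(k:ℝ)*(2*(M:ℝ)+3) := by push_cast; ring
    nlinarith [hlin₁, hcountR, hBMR]
  have hnk : (n:ℝ) ≤ (k:ℝ)*((m₁:ℝ) + 1) := by
    have h3 : n < k * m₁ + k := by omega
    have h4 : ((k * m₁ + k : ℕ) : ℝ) = (k:ℝ)*((m₁:ℝ)+1) := by push_cast; ring
    calc (n:ℝ) ≤ ((k*m₁ + k : ℕ) : ℝ) := by exact_mod_cast le_of_lt h3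
    _ = _ := h4
  have hfinal : ε / k * n ≤ ε * ((m₁:ℝ)+1) := by
    rw [div_mul_eq_mul_div, div_le_iff₀ (by positivity : (0:ℝ) < (k:ℝ))]
    calc ε * (n:ℝ) ≤ ε * ((k:ℝ)*((m₁:ℝ)+1)) := by
          apply mul_le_mul_of_nonneg_left hnk (le_of_lt hε)
    _ = ε * ((m₁:ℝ)+1) * k := by ring
  rw [rep_eq_bc A k n (by omega)]
  linarith
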